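/- Let r be a positive integer and H a complex Hilbert space. Let (e_k) and (u_k) be sequences of minimal tripotents in L(ℂ^r, H) converging in the weak operator topology to e and u respectively, such that for each k the tripotents e_k and u_k are triple orthogonal, i.e., e_k □ u_k = 0. Then {e, u, e} = e u* e = 0. -/

import Mathlib

open ContinuousLinearMap Filter

/-- The rank-one operator `a ⊗ b : ℂ^r → H`, `μ ↦ ⟨μ, a⟩ b` (inner product linear in the
first variable, i.e. `⟪a, μ⟫` in Mathlib's convention). -/
noncomputable def rankOne {r : ℕ} {H : Type*} [NormedAddCommGroup H] [InnerProductSpace ℂ H]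
    (a : EuclideanSpace ℂ (Fin r)) (b : H) : EuclideanSpace ℂ (Fin r) →L[ℂ] H :=
  (innerSL ℂ a).smulRight b

set_option linter.unusedSectionVars false
set_option linter.unusedVariables false
set_option linter.unnecessarySimpa false

section Aux
variable {r : ℕ} {H : Type*} [NormedAddCommGroup H] [InnerProductSpace ℂ H] [CompleteSpace H]

lemma rankOne_apply (a : EuclideanSpace ℂ (Fin r)) (b : H) (μ : EuclideanSpace ℂ (Fin r)) :
    rankOne a b μ = (inner ℂ a μ : ℂ) • b := rfl

lemma adjoint_rankOne_apply (a : EuclideanSpace ℂ (Fin r)) (b : H) (h : H) :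
    adjoint (rankOne a b) h = (inner ℂ b h : ℂ) • a := by
  apply ext_inner_right ℂ
  intro ν
  rw [adjoint_inner_left]
  simp [rankOne_apply, inner_smul_left, inner_smul_right]
  ring

lemma key (a c : EuclideanSpace ℂ (Fin r)) (b d : H)
    (ha : ‖a‖ = 1) (hb : ‖b‖ = 1) (hd : ‖d‖ = 1)
    (h : rankOne a b ∘L adjoint (rankOne c d) ∘L rankOne a d
       + rankOne a d ∘L adjoint (rankOne c d) ∘L rankOne a b = 0) :
    (inner ℂ a c : ℂ) = 0 := by
  have haa : (inner ℂ a a : ℂ) = 1 := by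
    rw [inner_self_eq_norm_sq_to_K, ha]; norm_num
  have hbb : (inner ℂ b b : ℂ) = 1 := by
    rw [inner_self_eq_norm_sq_to_K, hb]; norm_num
  have hdd : (inner ℂ d d : ℂ) = 1 := by
    rw [inner_self_eq_norm_sq_to_K, hd]; norm_num
  have h1 := congrArg (fun T : EuclideanSpace ℂ (Fin r) →L[ℂ] H => (inner ℂ (T a) b : ℂ)) h
  simp only [ContinuousLinearMap.add_apply, ContinuousLinearMap.comp_apply,
    rankOne_apply, adjoint_rankOne_apply, ContinuousLinearMap.zero_apply,
    inner_smul_left, inner_smul_right, inner_add_left, inner_zero_left,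
    map_mul, haa, hbb, hdd] at h1
  have h2 : (starRingEnd ℂ) (inner ℂ a c) * (1 + (starRingEnd ℂ) (inner ℂ d b) * inner ℂ d b) = 0 := by
    simp only [map_one] at h1
    rw [← h1]; ring
  rcases mul_eq_zero.mp h2 with h3 | h3
  · simpa using congrArg (starRingEnd ℂ) h3
  · exfalso
    have hre := congrArg Complex.re h3
    set z : ℂ := inner ℂ d b with hz
    simp only [Complex.add_re, Complex.one_re, Complex.mul_re, Complex.conj_re,
      Complex.conj_im, Complex.zero_re] at hre
    nlinarith [sq_nonneg z.re, sq_nonneg z.im]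

lemma weaklim_char (T : ℕ → EuclideanSpace ℂ (Fin r) →L[ℂ] H)
    (T' : EuclideanSpace ℂ (Fin r) →L[ℂ] H)
    (a : ℕ → EuclideanSpace ℂ (Fin r)) (b : ℕ → H) (A : EuclideanSpace ℂ (Fin r))
    (φ : ℕ → ℕ) (hφ : StrictMono φ)
    (hT : ∀ k, T k = rankOne (a k) (b k)) (hA : ‖A‖ = 1)
    (htA : Filter.Tendsto (fun k => a (φ k)) Filter.atTop (nhds A))
    (hw : ∀ (μ : EuclideanSpace ℂ (Fin r)) (h : H),
      Filter.Tendsto (fun k => (inner ℂ (T k μ) h : ℂ)) Filter.atTop (nhds (inner ℂ (T' μ) h))) :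
    ∀ (μ : EuclideanSpace ℂ (Fin r)) (h : H),
      (inner ℂ (T' μ) h : ℂ) = inner ℂ μ A * inner ℂ (T' A) h := by
  intro μ h
  have hTk : ∀ k (ν : EuclideanSpace ℂ (Fin r)),
      (inner ℂ (T k ν) h : ℂ) = inner ℂ ν (a k) * inner ℂ (b k) h := by
    intro k ν
    rw [hT k, rankOne_apply, inner_smul_left, inner_conj_symm]
  have hsub : ∀ ν : EuclideanSpace ℂ (Fin r),
      Filter.Tendsto (fun k => (inner ℂ ν (a (φ k)) : ℂ) * inner ℂ (b (φ k)) h)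
        Filter.atTop (nhds (inner ℂ (T' ν) h)) := by
    intro ν
    have h1 := (hw ν h).comp hφ.tendsto_atTop
    refine h1.congr fun k => ?_
    simp [Function.comp, hTk]
  have htν : ∀ ν : EuclideanSpace ℂ (Fin r),
      Filter.Tendsto (fun k => (inner ℂ ν (a (φ k)) : ℂ)) Filter.atTop (nhds (inner ℂ ν A)) :=
    fun ν => tendsto_const_nhds.inner htA
  have hden : Filter.Tendsto (fun k => (inner ℂ A (a (φ k)) : ℂ)) Filter.atTop (nhds 1) := by
    have := htν A
    rwa [show (inner ℂ A A : ℂ) = 1 by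
      rw [inner_self_eq_norm_sq_to_K, hA]; norm_num] at this
  have hne : ∀ᶠ k in Filter.atTop, (inner ℂ A (a (φ k)) : ℂ) ≠ 0 :=
    hden.eventually_ne one_ne_zero
  have hβ : Filter.Tendsto (fun k => (inner ℂ (b (φ k)) h : ℂ)) Filter.atTop
      (nhds (inner ℂ (T' A) h)) := by
    have hq := (hsub A).div hden one_ne_zero
    rw [div_one] at hq
    refine hq.congr' ?_
    filter_upwards [hne] with k hk
    simp only [Pi.div_apply]
    exact mul_div_cancel_left₀ _ hk
  exact tendsto_nhds_unique (hsub μ) ((htν μ).mul hβ)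

end Aux

/-- Corollary 5.5 (for the Cartan factor `L(ℂ^r, H)`): if `(e_k)` and `(u_k)` are sequences
of minimal tripotents converging weakly to `e` and `u` respectively, with `e_k □ u_k = 0`
(triple orthogonality: `e_k u_k* x + x u_k* e_k = 0` for all `x`) for each `k`, then
`{e, u, e} = e u* e = 0`. -/
theorem stmt5 {r : ℕ} (hr : 0 < r) {H : Type*} [NormedAddCommGroup H] [InnerProductSpace ℂ H]
    [CompleteSpace H]
    (e u : ℕ → EuclideanSpace ℂ (Fin r) →L[ℂ] H)
    (e' u' : EuclideanSpace ℂ (Fin r) →L[ℂ] H)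
    (hemin : ∀ k, ∃ (a : EuclideanSpace ℂ (Fin r)) (b : H),
      ‖a‖ = 1 ∧ ‖b‖ = 1 ∧ e k = rankOne a b)
    (humin : ∀ k, ∃ (c : EuclideanSpace ℂ (Fin r)) (d : H),
      ‖c‖ = 1 ∧ ‖d‖ = 1 ∧ u k = rankOne c d)
    (he : ∀ (μ : EuclideanSpace ℂ (Fin r)) (h : H),
      Tendsto (fun k => (inner ℂ (e k μ) h : ℂ)) atTop (nhds (inner ℂ (e' μ) h)))
    (hu : ∀ (μ : EuclideanSpace ℂ (Fin r)) (h : H),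
      Tendsto (fun k => (inner ℂ (u k μ) h : ℂ)) atTop (nhds (inner ℂ (u' μ) h)))
    (horth : ∀ k, ∀ x : EuclideanSpace ℂ (Fin r) →L[ℂ] H,
      e k ∘L adjoint (u k) ∘L x + x ∘L adjoint (u k) ∘L e k = 0) :
    e' ∘L adjoint u' ∘L e' = 0 := by
  choose a b ha hb hea using hemin
  choose c d hc hd huc using humin
  have hac : ∀ k, (inner ℂ (a k) (c k) : ℂ) = 0 := by
    intro k
    apply key (a k) (c k) (b k) (d k) (ha k) (hb k) (hd k)
    have h0 := horth k (rankOne (a k) (d k))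
    rwa [hea k, huc k] at h0
  obtain ⟨⟨A, C⟩, hmem, φ, hφ, hconv⟩ :=
    ((isCompact_sphere (0 : EuclideanSpace ℂ (Fin r)) 1).prod
      (isCompact_sphere (0 : EuclideanSpace ℂ (Fin r)) 1)).tendsto_subseq
      (x := fun k => (a k, c k))
      (fun k => Set.mk_mem_prod (mem_sphere_zero_iff_norm.mpr (ha k))
        (mem_sphere_zero_iff_norm.mpr (hc k)))
  obtain ⟨hA, hC⟩ := hmem
  rw [mem_sphere_zero_iff_norm] at hA hC
  have htA : Tendsto (fun k => a (φ k)) atTop (nhds A) :=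
    (continuous_fst.tendsto _).comp hconv
  have htC : Tendsto (fun k => c (φ k)) atTop (nhds C) :=
    (continuous_snd.tendsto _).comp hconv
  have hAC : (inner ℂ A C : ℂ) = 0 := by
    have h1 : Tendsto (fun k => (inner ℂ (a (φ k)) (c (φ k)) : ℂ)) atTop (nhds (inner ℂ A C)) :=
      htA.inner htC
    have h2 : Tendsto (fun k => (inner ℂ (a (φ k)) (c (φ k)) : ℂ)) atTop (nhds 0) := by
      simpa [hac] using (tendsto_const_nhds : Tendsto (fun _ : ℕ => (0:ℂ)) atTop (nhds 0))
    exact tendsto_nhds_unique h1 h2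
  have hechar := weaklim_char e e' a b A φ hφ hea hA htA he
  have huchar := weaklim_char u u' c d C φ hφ huc hC htC hu
  ext μ
  simp only [ContinuousLinearMap.comp_apply, ContinuousLinearMap.zero_apply]
  apply ext_inner_right ℂ
  intro h
  rw [hechar _ h, inner_zero_left]
  have h3 : (inner ℂ (adjoint u' (e' μ)) A : ℂ) = 0 := by
    rw [adjoint_inner_left, ← inner_conj_symm, huchar A (e' μ), hAC]
    simp
  rw [h3, zero_mul]
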